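/- Let R be a commutative ring and m ≥ 1. The map γ from the truncated big Witt vectors W_m(R) to the group of units (1 + T·R[T]/(T^{m+1}))^× ⊂ (R[T]/(T^{m+1}))^× sending (a_1, ..., a_m) to the class of ∏_{i=1}^m (1 − a_i T^i) is a group isomorphism onto the subgroup of units congruent to 1 mod T. -/

import Mathlib

open Polynomial

namespace WittGammaAux

variable {R : Type*} [CommRing R]

noncomputable def P (a : ℕ → R) (n : ℕ) : Polynomial R :=
  ∏ i ∈ Finset.range n, (1 - C (a i) * X ^ (i + 1))

lemma P_congr {a b : ℕ → R} {n : ℕ} (h : ∀ i < n, a i = b i) : P a n = P b n :=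
  Finset.prod_congr rfl fun i hi => by rw [h i (Finset.mem_range.mp hi)]

lemma P_coeff_zero (a : ℕ → R) (n : ℕ) : (P a n).coeff 0 = 1 := by
  simp [P, coeff_zero_eq_eval_zero, eval_prod]

lemma prod_sub_one_dvd {d : Polynomial R} {s : Finset ℕ} {f : ℕ → Polynomial R}
    (h : ∀ i ∈ s, d ∣ f i - 1) : d ∣ (∏ i ∈ s, f i) - 1 := by
  classical
  induction s using Finset.induction_on with
  | empty => simp
  | insert _ _ hj ih =>
    rename_i j s
    rw [Finset.prod_insert hj]
    have h1 : d ∣ f j - 1 := h j (Finset.mem_insert_self _ _)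
    have h2 : d ∣ (∏ i ∈ s, f i) - 1 := ih fun i hi => h i (Finset.mem_insert_of_mem hi)
    have key : f j * ∏ i ∈ s, f i - 1 = f j * ((∏ i ∈ s, f i) - 1) + (f j - 1) := by ring
    rw [key]
    exact dvd_add (h2.mul_left _) h1

lemma P_split {a : ℕ → R} {k n : ℕ} (h : k < n) :
    (X : Polynomial R) ^ (k + 2) ∣ P a n - (1 - C (a k) * X ^ (k + 1)) * P a k := by
  obtain ⟨t, rfl⟩ := Nat.exists_eq_add_of_le h
  have h1 : P a (k + 1 + t) = P a (k + 1) *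
      ∏ i ∈ Finset.range t, (1 - C (a (k + 1 + i)) * X ^ (k + 1 + i + 1)) := by
    rw [P, P, Finset.prod_range_add]
  have h2 : P a (k + 1) = P a k * (1 - C (a k) * X ^ (k + 1)) := by
    rw [P, P, Finset.prod_range_succ]
  have htail : (X : Polynomial R) ^ (k + 2) ∣
      (∏ i ∈ Finset.range t, (1 - C (a (k + 1 + i)) * X ^ (k + 1 + i + 1))) - 1 := by
    apply prod_sub_one_dvd
    intro i _
    have : (1 - C (a (k + 1 + i)) * X ^ (k + 1 + i + 1)) - 1
        = -(C (a (k + 1 + i)) * X ^ (k + 1 + i + 1)) := by ring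
    rw [this]
    exact (Dvd.dvd.mul_left (pow_dvd_pow X (by omega)) _).neg_right
  have key : P a (k + 1 + t) - (1 - C (a k) * X ^ (k + 1)) * P a k
      = ((1 - C (a k) * X ^ (k + 1)) * P a k) *
        ((∏ i ∈ Finset.range t, (1 - C (a (k + 1 + i)) * X ^ (k + 1 + i + 1))) - 1) := by
    rw [h1, h2]; ring
  rw [key]
  exact htail.mul_left _

lemma coeff_eq_of_dvd {f g : Polynomial R} {N j : ℕ}
    (h : (X : Polynomial R) ^ N ∣ f - g) (hj : j < N) : f.coeff j = g.coeff j := by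
  have := Polynomial.X_pow_dvd_iff.mp h j hj
  rw [coeff_sub] at this
  exact sub_eq_zero.mp this

lemma P_coeff_succ {a : ℕ → R} {k n : ℕ} (h : k < n) :
    (P a n).coeff (k + 1) = (P a k).coeff (k + 1) - a k := by
  rw [coeff_eq_of_dvd (P_split h) (Nat.lt_succ_self (k + 1))]
  rw [sub_mul, one_mul, coeff_sub]
  congr 1
  rw [mul_assoc, coeff_C_mul]
  have h2 : ((X : Polynomial R) ^ (k + 1) * P a k).coeff (k + 1) = (P a k).coeff 0 := by
    simpa using Polynomial.coeff_X_pow_mul (P a k) (k + 1) 0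
  rw [h2, P_coeff_zero, mul_one]

lemma exists_P (f : Polynomial R) (hf : f.coeff 0 = 1) (n : ℕ) :
    ∃ a : ℕ → R, ∀ j ≤ n, (P a n).coeff j = f.coeff j := by
  induction n with
  | zero =>
    refine ⟨0, fun j hj => ?_⟩
    interval_cases j
    simpa [P] using hf.symm
  | succ n ih =>
    obtain ⟨a, ha⟩ := ih
    set c := (P a n).coeff (n + 1) - f.coeff (n + 1) with hc
    set a' := Function.update a n c with ha'
    have hupd : ∀ i < n, a' i = a i := fun i hi =>
      Function.update_of_ne (Nat.ne_of_lt hi) _ _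
    have hP : P a' n = P a n := P_congr hupd
    have hsucc : P a' (n + 1) = P a' n * (1 - C c * X ^ (n + 1)) := by
      rw [P, P, Finset.prod_range_succ, ha', Function.update_self]
    refine ⟨a', fun j hj => ?_⟩
    rcases Nat.lt_or_ge j (n + 1) with hjn | hjn
    · have hz : (P a' n * (C c * X ^ (n + 1))).coeff j = 0 := by
        apply Polynomial.X_pow_dvd_iff.mp ?_ j hjn
        exact Dvd.dvd.mul_left (Dvd.dvd.mul_left dvd_rfl _) _
      have : (P a' (n + 1)).coeff j = (P a' n).coeff j := by
        rw [hsucc, mul_sub, mul_one, coeff_sub, hz, sub_zero]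
      rw [this, hP]
      exact ha j (by omega)
    · have hj' : j = n + 1 := by omega
      subst hj'
      rw [P_coeff_succ (Nat.lt_succ_self n), hP, ha', Function.update_self, hc]
      ring

end WittGammaAux

namespace WittGammaAux

variable {R : Type*} [CommRing R]

lemma prod_fin_eq {m : ℕ} (a : Fin m → R) :
    (∏ i : Fin m, (1 - C (a i) * X ^ ((i : ℕ) + 1)))
      = P (fun i => if h : i < m then a ⟨i, h⟩ else 0) m := by
  rw [P, ← Fin.prod_univ_eq_prod_range
    (fun i => 1 - C (if h : i < m then a ⟨i, h⟩ else 0) * X ^ (i + 1)) m]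
  exact Finset.prod_congr rfl fun i _ => by rw [dif_pos i.isLt]

end WittGammaAux

open WittGammaAux

theorem witt_gamma_bijective
    (R : Type*) [CommRing R] (m : ℕ) (hm : 1 ≤ m) :
    Function.Injective (fun a : Fin m → R =>
      Ideal.Quotient.mk (Ideal.span {(X : Polynomial R) ^ (m + 1)})
        (∏ i : Fin m, (1 - C (a i) * X ^ ((i : ℕ) + 1))))
    ∧ ∀ x : Polynomial R ⧸ Ideal.span {(X : Polynomial R) ^ (m + 1)},
      ((∃ a : Fin m → R,
        Ideal.Quotient.mk (Ideal.span {(X : Polynomial R) ^ (m + 1)})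
          (∏ i : Fin m, (1 - C (a i) * X ^ ((i : ℕ) + 1))) = x)
        ↔ (IsUnit x ∧ ∃ g : Polynomial R,
            x = Ideal.Quotient.mk (Ideal.span {(X : Polynomial R) ^ (m + 1)})
              (1 + X * g))) := by
  set I : Ideal (Polynomial R) := Ideal.span {(X : Polynomial R) ^ (m + 1)} with hI
  constructor
  · intro a b hab
    simp only at hab
    rw [prod_fin_eq, prod_fin_eq, Ideal.Quotient.eq, hI, Ideal.mem_span_singleton] at hab
    set a' : ℕ → R := fun i => if h : i < m then a ⟨i, h⟩ else 0 with ha'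
    set b' : ℕ → R := fun i => if h : i < m then b ⟨i, h⟩ else 0 with hb'
    have key : ∀ k, k < m → a' k = b' k := by
      intro k
      induction k using Nat.strong_induction_on with
      | _ k ih =>
        intro hk
        have hPk : P a' k = P b' k := P_congr fun i hi => ih i hi (by omega)
        have hc : (P a' m).coeff (k + 1) = (P b' m).coeff (k + 1) :=
          coeff_eq_of_dvd hab (by omega)
        rw [P_coeff_succ hk, P_coeff_succ hk, hPk] at hc
        exact sub_right_injective hc
    funext i
    have := key i i.isLt
    rw [ha', hb'] at this
    simpa [dif_pos i.isLt] using this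
  · intro x
    constructor
    · rintro ⟨a, rfl⟩
      rw [prod_fin_eq]
      set a' : ℕ → R := fun i => if h : i < m then a ⟨i, h⟩ else 0 with ha'
      have h0 : (P a' m - 1).coeff 0 = 0 := by
        rw [coeff_sub, P_coeff_zero]; simp
      obtain ⟨g, hg⟩ := (Polynomial.X_dvd_iff).mpr h0
      have hPg : P a' m = 1 + X * g := by rw [← hg]; ring
      constructor
      · rw [hPg, map_add, map_one]
        refine IsNilpotent.isUnit_one_add ?_
        refine ⟨m + 1, ?_⟩
        rw [← map_pow, mul_pow, Ideal.Quotient.eq_zero_iff_mem, hI,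
          Ideal.mem_span_singleton]
        exact Dvd.dvd.mul_right dvd_rfl _
      · exact ⟨g, by rw [hPg]⟩
    · rintro ⟨-, g, rfl⟩
      have hf0 : (1 + X * g : Polynomial R).coeff 0 = 1 := by
        simp [coeff_add, coeff_one, coeff_X_mul]
      obtain ⟨a, ha⟩ := exists_P (1 + X * g) hf0 m
      refine ⟨fun i => a i, ?_⟩
      rw [prod_fin_eq]
      have hPa : P (fun i => if h : i < m then a (⟨i, h⟩ : Fin m) else 0) m = P a m :=
        P_congr fun i hi => by simp [dif_pos hi]
      rw [hPa, Ideal.Quotient.eq, hI, Ideal.mem_span_singleton]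
      rw [Polynomial.X_pow_dvd_iff]
      intro d hd
      rw [coeff_sub, ha d (by omega), sub_self]
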